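/- Combining the previous two results: if p_t = softmax(W h_t + b) and p_{t−1} = softmax(W h_{t−1} + b), the observable-gain condition ‖ΠWu‖₂ ≥ σ_W‖u‖₂ holds, and κ > 0 lower-bounds the softmax Jacobian curvature on 𝟏^⊥ along the logit segment, then JSD(p_t, p_{t−1}) ≥ (κ²σ_W²/8)·‖h_t − h_{t−1}‖₂². -/

import Mathlib

open Real BigOperators Matrix

/-- Softmax on `ℝ^V`. -/
noncomputable def softmax {V : ℕ} (z : Fin V → ℝ) : Fin V → ℝ :=
  fun i => Real.exp (z i) / ∑ j, Real.exp (z j)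

/-- Softmax Jacobian `J(p) = diag(p) - p pᵀ`. -/
noncomputable def softmaxJac {V : ℕ} (p : Fin V → ℝ) : Matrix (Fin V) (Fin V) ℝ :=
  Matrix.diagonal p - Matrix.vecMulVec p p

/-- Orthogonal projection onto the subspace orthogonal to the all-ones vector. -/
noncomputable def projOne {V : ℕ} (v : Fin V → ℝ) : Fin V → ℝ :=
  fun i => v i - (∑ j, v j) / V

/-- KL divergence with the convention `0 * log 0 = 0`. -/
noncomputable def klDiv {α : Type*} [Fintype α] (P Q : α → ℝ) : ℝ :=
  ∑ x, if P x = 0 then 0 else P x * Real.log (P x / Q x)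

/-- Jensen–Shannon divergence with midpoint `M = (P+Q)/2`. -/
noncomputable def jsd {α : Type*} [Fintype α] (P Q : α → ℝ) : ℝ :=
  (1/2) * klDiv P (fun x => (P x + Q x) / 2) + (1/2) * klDiv Q (fun x => (P x + Q x) / 2)


-- derivative helpers
lemma psi_deriv (x : ℝ) (hx : x ∈ Set.Ioo (0:ℝ) 1) :
    HasDerivAt (fun x : ℝ => Real.log x - Real.log (1-x) - 4*x + 2)
      (1/x + 1/(1-x) - 4) x := by
  have h1 : (0:ℝ) < x := hx.1
  have h2 : (0:ℝ) < 1 - x := by linarith [hx.2]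
  have d1 : HasDerivAt Real.log (1/x) x := by
    simpa [one_div] using Real.hasDerivAt_log (ne_of_gt h1)
  have d2 : HasDerivAt (fun x : ℝ => Real.log (1-x)) (-(1/(1-x))) x := by
    have : HasDerivAt (fun x : ℝ => 1 - x) (-1) x := by
      simpa using (hasDerivAt_id x).const_sub (1:ℝ)
    have := (Real.hasDerivAt_log (ne_of_gt h2)).comp x this
    exact this.congr_deriv (by ring)
  have d3 : HasDerivAt (fun x : ℝ => 4*x) 4 x := by
    simpa using (hasDerivAt_id x).const_mul (4:ℝ)
  have := ((d1.sub d2).sub d3).add_const (2:ℝ)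
  refine this.congr_deriv ?_
  ring

lemma phi_deriv (x : ℝ) (hx : x ∈ Set.Ioo (0:ℝ) 1) :
    HasDerivAt (fun x : ℝ => Real.log 2 + x * Real.log x + (1-x) * Real.log (1-x) - 2*(x-1/2)^2)
      (Real.log x - Real.log (1-x) - 4*x + 2) x := by
  have h1 : (0:ℝ) < x := hx.1
  have h2 : (0:ℝ) < 1 - x := by linarith [hx.2]
  have d1 : HasDerivAt (fun x : ℝ => x * Real.log x) (Real.log x + 1) x := by
    have := (hasDerivAt_id x).mul (Real.hasDerivAt_log (ne_of_gt h1))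
    refine this.congr_deriv ?_
    field_simp; simp; ring
  have dmin : HasDerivAt (fun x : ℝ => 1 - x) (-1) x := by
    simpa using (hasDerivAt_id x).const_sub (1:ℝ)
  have d2 : HasDerivAt (fun x : ℝ => (1-x) * Real.log (1-x)) (-(Real.log (1-x) + 1)) x := by
    have base : HasDerivAt (fun y : ℝ => y * Real.log y) (Real.log (1-x) + 1) (1-x) := by
      have := (hasDerivAt_id (1-x)).mul (Real.hasDerivAt_log (ne_of_gt h2))
      refine this.congr_deriv ?_
      field_simp; simp; ring
    have := base.comp x dmin
    refine this.congr_deriv ?_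
    ring
  have d3 : HasDerivAt (fun x : ℝ => 2*(x-1/2)^2) (4*(x-1/2)) x := by
    have : HasDerivAt (fun x : ℝ => x - 1/2) 1 x := by
      simpa using (hasDerivAt_id x).sub_const (1/2:ℝ)
    have := ((this.pow 2).const_mul (2:ℝ))
    refine this.congr_deriv ?_
    ring
  have := (((hasDerivAt_const x (Real.log 2)).add d1).add d2).sub d3
  refine this.congr_deriv ?_
  ring

-- binary Pinsker
lemma binary_pinsker (x : ℝ) (hx : x ∈ Set.Ioo (0:ℝ) 1) :
    2*(x-1/2)^2 ≤ Real.log 2 + x * Real.log x + (1-x) * Real.log (1-x) := by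
  set ψ : ℝ → ℝ := fun x => Real.log x - Real.log (1-x) - 4*x + 2 with hψ
  set φ : ℝ → ℝ := fun x => Real.log 2 + x * Real.log x + (1-x) * Real.log (1-x) - 2*(x-1/2)^2 with hφ
  have hcontψ : ContinuousOn ψ (Set.Ioo 0 1) := by
    apply ContinuousOn.add
    apply ContinuousOn.sub
    apply ContinuousOn.sub
    · exact Real.continuousOn_log.comp (continuous_id.continuousOn) (fun y hy => ne_of_gt hy.1)
    · exact Real.continuousOn_log.comp (by fun_prop) (fun y hy => by simp; intro h; nlinarith [hy.2, h])
    · fun_prop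
    · fun_prop
  have hmono : MonotoneOn ψ (Set.Ioo 0 1) := by
    apply monotoneOn_of_deriv_nonneg (convex_Ioo 0 1) hcontψ
    · intro y hy
      rw [interior_Ioo] at hy
      exact ((psi_deriv y hy).differentiableAt).differentiableWithinAt
    · intro y hy
      rw [interior_Ioo] at hy
      rw [(psi_deriv y hy).deriv]
      have h1 : (0:ℝ) < y := hy.1
      have h2 : (0:ℝ) < 1 - y := by linarith [hy.2]
      rw [div_add_div _ _ (ne_of_gt h1) (ne_of_gt h2), ← sub_nonneg]
      have heq : (1*(1-y) + y*1)/(y*(1-y)) - 4 = (2*y-1)^2/(y*(1-y)) := by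
        field_simp; ring
      rw [heq]
      simpa using div_nonneg (sq_nonneg (2*y-1)) (le_of_lt (mul_pos h1 h2))
  have hψhalf : ψ (1/2) = 0 := by
    simp only [hψ]
    norm_num [Real.log_inv]
  -- deriv of φ is ψ; φ(1/2) = 0
  have hφhalf : φ (1/2) = 0 := by
    simp only [hφ]
    norm_num
    rw [Real.log_div one_ne_zero two_ne_zero]
    simp
    ring
  have hcontφ : ContinuousOn φ (Set.Ioo 0 1) :=
    fun y hy => ((phi_deriv y hy).differentiableAt).continuousAt.continuousWithinAt
  have half_mem : (1/2:ℝ) ∈ Set.Ioo (0:ℝ) 1 := by norm_num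
  -- φ antitone on Ioc 0 (1/2) ⊆, monotone on Ico ... within Ioo
  rcases le_or_gt x (1/2) with hhalf | hhalf
  · -- on Ioo 0 1 ∩ Iic (1/2) = Ioc 0 (1/2)... use antitoneOn on Ioc? closure issue.
    have hsub : Set.Ioc (0:ℝ) (1/2) ⊆ Set.Ioo 0 1 := fun y hy => ⟨hy.1, lt_of_le_of_lt hy.2 (by norm_num)⟩
    have hanti : AntitoneOn φ (Set.Ioc (0:ℝ) (1/2)) := by
      apply antitoneOn_of_deriv_nonpos (convex_Ioc 0 (1/2)) (hcontφ.mono hsub)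
      · intro y hy
        rw [interior_Ioc] at hy
        exact ((phi_deriv y ⟨hy.1, by linarith [hy.2]⟩).differentiableAt).differentiableWithinAt
      · intro y hy
        rw [interior_Ioc] at hy
        have hy' : y ∈ Set.Ioo (0:ℝ) 1 := ⟨hy.1, by linarith [hy.2]⟩
        rw [(phi_deriv y hy').deriv]
        have := hmono hy' half_mem (le_of_lt hy.2)
        rw [hψhalf] at this
        exact this
    have := hanti ⟨hx.1, hhalf⟩ ⟨by norm_num, le_refl _⟩ hhalf
    rw [hφhalf] at this
    simp only [hφ] at this
    linarith
  · have hsub : Set.Ico (1/2:ℝ) 1 ⊆ Set.Ioo 0 1 := fun y hy => ⟨lt_of_lt_of_le (by norm_num) hy.1, hy.2⟩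
    have hmono2 : MonotoneOn φ (Set.Ico (1/2:ℝ) 1) := by
      apply monotoneOn_of_deriv_nonneg (convex_Ico (1/2) 1) (hcontφ.mono hsub)
      · intro y hy
        rw [interior_Ico] at hy
        exact ((phi_deriv y ⟨by linarith [hy.1], hy.2⟩).differentiableAt).differentiableWithinAt
      · intro y hy
        rw [interior_Ico] at hy
        have hy' : y ∈ Set.Ioo (0:ℝ) 1 := ⟨by linarith [hy.1], hy.2⟩
        rw [(phi_deriv y hy').deriv]
        have := hmono half_mem hy' (le_of_lt hy.1)
        rw [hψhalf] at this
        exact this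
    have := hmono2 ⟨le_refl _, by norm_num⟩ ⟨le_of_lt hhalf, hx.2⟩ (le_of_lt hhalf)
    rw [hφhalf] at this
    simp only [hφ] at this
    linarith

lemma pointwise_jsd (p q : ℝ) (hp : 0 < p) (hq : 0 < q) (hp1 : p ≤ 1) (hq1 : q ≤ 1) :
    (p-q)^2/4 ≤ p * Real.log (p/((p+q)/2)) + q * Real.log (q/((p+q)/2)) := by
  have hs : 0 < p + q := by linarith
  have hx : p/(p+q) ∈ Set.Ioo (0:ℝ) 1 := by
    constructor
    · positivity
    · rw [div_lt_one hs]; linarith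
  have key := binary_pinsker (p/(p+q)) hx
  have h1x : 1 - p/(p+q) = q/(p+q) := by field_simp; ring
  rw [h1x] at key
  have e1 : Real.log (p/((p+q)/2)) = Real.log p - Real.log (p+q) + Real.log 2 := by
    rw [Real.log_div (ne_of_gt hp) (by positivity), Real.log_div (ne_of_gt hs) two_ne_zero]
    ring
  have e2 : Real.log (q/((p+q)/2)) = Real.log q - Real.log (p+q) + Real.log 2 := by
    rw [Real.log_div (ne_of_gt hq) (by positivity), Real.log_div (ne_of_gt hs) two_ne_zero]
    ring
  have e3 : Real.log (p/(p+q)) = Real.log p - Real.log (p+q) :=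
    Real.log_div (ne_of_gt hp) (ne_of_gt hs)
  have e4 : Real.log (q/(p+q)) = Real.log q - Real.log (p+q) :=
    Real.log_div (ne_of_gt hq) (ne_of_gt hs)
  rw [e3, e4] at key
  rw [e1, e2]
  have hxd : p/(p+q) - 1/2 = (p-q)/(2*(p+q)) := by field_simp; ring
  rw [hxd] at key
  have key2 := mul_le_mul_of_nonneg_left key (le_of_lt hs)
  have lhs_eq : (p+q)*(2*((p-q)/(2*(p+q)))^2) = (p-q)^2/(2*(p+q)) := by
    field_simp
  have rhs_eq : (p+q)*(Real.log 2 + p/(p+q)*(Real.log p - Real.log (p+q)) + q/(p+q)*(Real.log q - Real.log (p+q)))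
      = p*(Real.log p - Real.log (p+q) + Real.log 2) + q*(Real.log q - Real.log (p+q) + Real.log 2) := by
    field_simp; ring
  rw [lhs_eq, rhs_eq] at key2
  have hquart : (p-q)^2/4 ≤ (p-q)^2/(2*(p+q)) :=
    div_le_div_of_nonneg_left (sq_nonneg _) (by linarith) (by linarith)
  linarith

lemma sum_exp_pos {V : ℕ} (hV : 0 < V) (z : Fin V → ℝ) : 0 < ∑ j, Real.exp (z j) := by
  apply Finset.sum_pos (fun j _ => Real.exp_pos _)
  have : Nonempty (Fin V) := Fin.pos_iff_nonempty.mp hV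
  exact Finset.univ_nonempty

lemma softmax_sum_one {V : ℕ} (hV : 0 < V) (z : Fin V → ℝ) : ∑ i, softmax z i = 1 := by
  simp only [softmax]
  rw [← Finset.sum_div]
  exact div_self (ne_of_gt (sum_exp_pos hV z))

lemma quad_form {V : ℕ} (p w : Fin V → ℝ) :
    w ⬝ᵥ (softmaxJac p *ᵥ w) = (∑ i, p i * w i^2) - (∑ i, p i * w i)^2 := by
  simp only [softmaxJac, Matrix.sub_mulVec, Pi.sub_apply, Matrix.mulVec_diagonal]
  simp only [Pi.sub_apply, Matrix.mulVec, Matrix.vecMulVec_apply, dotProduct,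
    Matrix.diagonal_apply, ite_mul, zero_mul, Finset.sum_ite_eq, Finset.mem_univ, if_true]
  have e1 : ∀ i : Fin V, w i * (p i * w i - ∑ j, p i * p j * w j)
      = p i * w i^2 - p i * w i * ∑ j, p j * w j := by
    intro i
    rw [mul_sub]
    congr 1
    · ring
    · rw [Finset.mul_sum, Finset.mul_sum]
      congr 1; funext j; ring
  calc ∑ i, w i * (p i * w i - ∑ j, p i * p j * w j)
      = ∑ i, (p i * w i^2 - p i * w i * ∑ j, p j * w j) :=
        Finset.sum_congr rfl (fun i _ => e1 i)
    _ = (∑ i, p i * w i^2) - ∑ i, (p i * w i * ∑ j, p j * w j) := Finset.sum_sub_distrib _ _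
    _ = (∑ i, p i * w i^2) - (∑ i, p i * w i)^2 := by
        rw [← Finset.sum_mul, sq]

lemma quad_shift {V : ℕ} (p w : Fin V → ℝ) (c : ℝ) (hp : ∑ i, p i = 1) :
    (∑ i, p i * (w i - c)^2) - (∑ i, p i * (w i - c))^2
      = (∑ i, p i * w i^2) - (∑ i, p i * w i)^2 := by
  have e1 : ∑ i, p i * (w i - c)^2
      = (∑ i, p i * w i^2) - 2*c*(∑ i, p i * w i) + c^2 * (∑ i, p i) := by
    rw [Finset.mul_sum, Finset.mul_sum, ← Finset.sum_sub_distrib, ← Finset.sum_add_distrib]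
    congr 1; funext i; ring
  have e2 : ∑ i, p i * (w i - c) = (∑ i, p i * w i) - c * (∑ i, p i) := by
    rw [Finset.mul_sum, ← Finset.sum_sub_distrib]
    congr 1; funext i; ring
  rw [e1, e2, hp]
  ring

lemma softmax_dot_deriv {V : ℕ} (hV : 0 < V) (z₀ Δ : Fin V → ℝ) (s : ℝ) :
    HasDerivAt (fun s : ℝ => ∑ i, Δ i * softmax (fun j => z₀ j + s * Δ j) i)
      ((∑ i, softmax (fun j => z₀ j + s * Δ j) i * Δ i^2)
        - (∑ i, softmax (fun j => z₀ j + s * Δ j) i * Δ i)^2) s := by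
  set N : ℝ → ℝ := fun s => ∑ i, Δ i * Real.exp (z₀ i + s * Δ i) with hN
  set D : ℝ → ℝ := fun s => ∑ i, Real.exp (z₀ i + s * Δ i) with hD
  set NP : ℝ := ∑ i, Δ i^2 * Real.exp (z₀ i + s * Δ i) with hNP
  have hDpos : ∀ t : ℝ, 0 < D t := fun t => sum_exp_pos hV _
  have hderiv_term : ∀ (i : Fin V) (t : ℝ),
      HasDerivAt (fun s : ℝ => Real.exp (z₀ i + s * Δ i)) (Δ i * Real.exp (z₀ i + t * Δ i)) t := by
    intro i t
    have h1 : HasDerivAt (fun s : ℝ => z₀ i + s * Δ i) (Δ i) t := by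
      simpa using ((hasDerivAt_id t).mul_const (Δ i)).const_add (z₀ i)
    simpa [mul_comm] using h1.exp
  have hdD : HasDerivAt D (N s) s := by
    rw [hN]
    simpa using HasDerivAt.fun_sum (fun i _ => hderiv_term i s)
  have hdN : HasDerivAt N NP s := by
    rw [hN, hNP]
    apply HasDerivAt.fun_sum
    intro i _
    simpa [sq, mul_assoc, mul_comm, mul_left_comm] using (hderiv_term i s).const_mul (Δ i)
  have hfeq : (fun s : ℝ => ∑ i, Δ i * softmax (fun j => z₀ j + s * Δ j) i)
      = fun s => N s / D s := by
    funext t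
    simp only [softmax, hN, hD]
    rw [Finset.sum_div]
    congr 1; funext i; rw [mul_div_assoc]
  rw [hfeq]
  have hdf := hdN.div hdD (ne_of_gt (hDpos s))
  have e1 : ∑ i, softmax (fun j => z₀ j + s * Δ j) i * Δ i^2 = NP / D s := by
    simp only [softmax, hNP, hD]
    rw [Finset.sum_div]
    congr 1; funext i; rw [div_mul_eq_mul_div, mul_comm]
  have e2 : ∑ i, softmax (fun j => z₀ j + s * Δ j) i * Δ i = N s / D s := by
    simp only [softmax, hN, hD]
    rw [Finset.sum_div]
    congr 1; funext i; rw [div_mul_eq_mul_div, mul_comm]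
  rw [e1, e2]
  refine hdf.congr_deriv ?_
  have hD0 : D s ≠ 0 := ne_of_gt (hDpos s)
  field_simp

lemma softmax_pos {V : ℕ} (hV : 0 < V) (z : Fin V → ℝ) (i : Fin V) : 0 < softmax z i := by
  have hD : 0 < ∑ j, Real.exp (z j) := by
    apply Finset.sum_pos (fun j _ => Real.exp_pos _)
    have : Nonempty (Fin V) := Fin.pos_iff_nonempty.mp hV
    exact Finset.univ_nonempty
  exact div_pos (Real.exp_pos _) hD

lemma softmax_le_one {V : ℕ} (hV : 0 < V) (z : Fin V → ℝ) (i : Fin V) : softmax z i ≤ 1 := by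
  have hD : 0 < ∑ j, Real.exp (z j) := by
    apply Finset.sum_pos (fun j _ => Real.exp_pos _)
    have : Nonempty (Fin V) := Fin.pos_iff_nonempty.mp hV
    exact Finset.univ_nonempty
  rw [softmax, div_le_one hD]
  exact Finset.single_le_sum (fun j _ => le_of_lt (Real.exp_pos _)) (Finset.mem_univ i)

lemma jsd_ge_sq {V : ℕ} (hV : 0 < V) (z₁ z₂ : Fin V → ℝ) :
    (1/8) * ∑ i, (softmax z₁ i - softmax z₂ i)^2 ≤ jsd (softmax z₁) (softmax z₂) := by
  have hP := softmax_pos hV z₁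
  have hQ := softmax_pos hV z₂
  rw [jsd, klDiv, klDiv, Finset.mul_sum, Finset.mul_sum, Finset.mul_sum,
    ← Finset.sum_add_distrib]

  apply Finset.sum_le_sum
  intro i _
  rw [if_neg (ne_of_gt (hP i)), if_neg (ne_of_gt (hQ i))]
  have := pointwise_jsd (softmax z₁ i) (softmax z₂ i) (hP i) (hQ i)
    (softmax_le_one hV z₁ i) (softmax_le_one hV z₂ i)
  linarith


/-- Observable instability lower-bounds internal step change:
JSD(p_t, p_{t-1}) ≥ (κ² σ_W² / 8) ‖h_t - h_{t-1}‖₂². -/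
theorem jsd_lower_bounds_state_change {V d : ℕ} (hV : 0 < V)
    (W : Matrix (Fin V) (Fin d) ℝ) (b : Fin V → ℝ)
    (σW : ℝ) (hσpos : 0 < σW)
    (hgain : ∀ u : Fin d → ℝ,
      σW * Real.sqrt (∑ i, u i ^ 2) ≤ Real.sqrt (∑ i, projOne (W *ᵥ u) i ^ 2))
    (ht htm : Fin d → ℝ) (κ : ℝ) (hκpos : 0 < κ)
    (hκ : ∀ s ∈ Set.Icc (0:ℝ) 1, ∀ v : Fin V → ℝ, (∑ i, v i) = 0 →
      κ * ∑ i, v i ^ 2 ≤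
        v ⬝ᵥ (softmaxJac (softmax ((W *ᵥ htm + b) + s • ((W *ᵥ ht + b) - (W *ᵥ htm + b)))) *ᵥ v)) :
    κ ^ 2 * σW ^ 2 / 8 * ∑ i, (ht i - htm i) ^ 2 ≤
      jsd (softmax (W *ᵥ ht + b)) (softmax (W *ᵥ htm + b)) := by
  classical
  set z₀ : Fin V → ℝ := W *ᵥ htm + b with hz₀
  set z₁ : Fin V → ℝ := W *ᵥ ht + b with hz₁
  set Δ : Fin V → ℝ := fun j => z₁ j - z₀ j with hΔdef
  set u : Fin d → ℝ := fun i => ht i - htm i with hudef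
  have hVne : (V:ℝ) ≠ 0 := Nat.cast_ne_zero.mpr (Nat.pos_iff_ne_zero.mp hV)
  have hWu : W *ᵥ u = Δ := by
    funext j
    simp only [hΔdef, hz₀, hz₁, hudef, Matrix.mulVec, dotProduct, Pi.add_apply]
    rw [show (∑ k, W j k * (ht k - htm k)) = ∑ k, (W j k * ht k - W j k * htm k) from
      Finset.sum_congr rfl (fun k _ => by ring), Finset.sum_sub_distrib]
    ring
  set v : Fin V → ℝ := projOne Δ with hvdef
  set c0 : ℝ := (∑ j, Δ j) / (V:ℝ) with hc0
  have hveq : v = fun i => Δ i - c0 := rfl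
  have hsumv : (∑ i, v i) = 0 := by
    rw [hveq, Finset.sum_sub_distrib, Finset.sum_const, Finset.card_univ, Fintype.card_fin,
      nsmul_eq_mul, hc0]
    field_simp; ring
  set P : Fin V → ℝ := softmax z₁ with hP
  set Q : Fin V → ℝ := softmax z₀ with hQdef
  set f : ℝ → ℝ := fun s => ∑ i, Δ i * softmax (fun j => z₀ j + s * Δ j) i with hfdef
  obtain ⟨c, hc, hceq⟩ := exists_hasDerivAt_eq_slope f
    (fun s => (∑ i, softmax (fun j => z₀ j + s * Δ j) i * Δ i^2)
      - (∑ i, softmax (fun j => z₀ j + s * Δ j) i * Δ i)^2)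
    one_pos
    (fun x _ => (softmax_dot_deriv hV z₀ Δ x).continuousAt.continuousWithinAt)
    (fun x _ => softmax_dot_deriv hV z₀ Δ x)
  have hf1 : f 1 = ∑ i, Δ i * P i := by
    simp only [hfdef, hP]
    congr 1
    funext i
    congr 2
    funext j
    simp only [hΔdef]
    ring
  have hf0 : f 0 = ∑ i, Δ i * Q i := by
    simp only [hfdef, hQdef]
    congr 1
    funext i
    congr 2
    funext j
    simp only [hΔdef]
    ring
  have hcIcc : c ∈ Set.Icc (0:ℝ) 1 := ⟨le_of_lt hc.1, le_of_lt hc.2⟩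
  have harg : z₀ + c • (z₁ - z₀) = (fun j => z₀ j + c * Δ j) := by
    funext j
    simp [hΔdef, smul_eq_mul]
  have hκc := hκ c hcIcc v hsumv
  rw [harg, quad_form] at hκc
  set p : Fin V → ℝ := softmax (fun j => z₀ j + c * Δ j) with hpdef
  have hps : ∑ i, p i = 1 := softmax_sum_one hV _
  have hshift := quad_shift p Δ c0 hps
  have hQc : κ * ∑ i, v i^2 ≤ (∑ i, p i * Δ i^2) - (∑ i, p i * Δ i)^2 := by
    rw [← hshift]
    calc κ * ∑ i, v i^2 ≤ (∑ i, p i * v i^2) - (∑ i, p i * v i)^2 := hκc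
      _ = (∑ i, p i * (Δ i - c0)^2) - (∑ i, p i * (Δ i - c0))^2 := by rw [hveq]
  -- f' c = f 1 - f 0
  have hslope : (∑ i, p i * Δ i^2) - (∑ i, p i * Δ i)^2 = f 1 - f 0 := by
    rw [hceq]
    norm_num
  have hsumPQ : ∑ i, (P i - Q i) = 0 := by
    rw [Finset.sum_sub_distrib, hP, hQdef, softmax_sum_one hV, softmax_sum_one hV]
    ring
  have hΔPQ : f 1 - f 0 = ∑ i, Δ i * (P i - Q i) := by
    rw [hf1, hf0, ← Finset.sum_sub_distrib]
    congr 1; funext i; ring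
  have hvPQ : ∑ i, v i * (P i - Q i) = ∑ i, Δ i * (P i - Q i) := by
    rw [hveq]
    rw [show (∑ i, (Δ i - c0) * (P i - Q i))
        = ∑ i, (Δ i * (P i - Q i) - c0 * (P i - Q i)) from
      Finset.sum_congr rfl (fun i _ => by ring), Finset.sum_sub_distrib, ← Finset.mul_sum,
      hsumPQ, mul_zero, sub_zero]
  have key1 : κ * ∑ i, v i^2 ≤ ∑ i, v i * (P i - Q i) := by
    rw [hvPQ, ← hΔPQ, ← hslope]
    exact hQc
  have hcs := Finset.sum_mul_sq_le_sq_mul_sq Finset.univ v (fun i => P i - Q i)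
  set A2 : ℝ := ∑ i, v i^2 with hA2def
  set B2 : ℝ := ∑ i, (P i - Q i)^2 with hB2def
  have hA2nn : 0 ≤ A2 := Finset.sum_nonneg (fun i _ => sq_nonneg _)
  have hB2nn : 0 ≤ B2 := Finset.sum_nonneg (fun i _ => sq_nonneg _)
  have hgain' : σW^2 * ∑ i, u i^2 ≤ A2 := by
    have h := hgain u
    rw [hWu] at h
    have hAe : (∑ i, projOne Δ i ^2) = A2 := rfl
    rw [hAe] at h
    have h2 : (σW * Real.sqrt (∑ i, u i^2))^2 ≤ (Real.sqrt A2)^2 :=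
      pow_le_pow_left₀ (by positivity) h 2
    rw [mul_pow, Real.sq_sqrt (Finset.sum_nonneg (fun i _ => sq_nonneg _)),
      Real.sq_sqrt hA2nn] at h2
    exact h2
  -- κ² A2² ≤ A2 * B2
  have hk2 : (κ * A2)^2 ≤ A2 * B2 := by
    have h0 : 0 ≤ κ * A2 := mul_nonneg (le_of_lt hκpos) hA2nn
    calc (κ * A2)^2 ≤ (∑ i, v i * (P i - Q i))^2 := by
          apply sq_le_sq'
          · linarith [key1, h0]
          · exact key1
      _ ≤ A2 * B2 := hcs
  have hfinal : κ^2 * σW^2 * ∑ i, u i^2 ≤ B2 := by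
    rcases eq_or_lt_of_le hA2nn with hA0 | hA0
    · have h1 : σW^2 * ∑ i, u i^2 ≤ 0 := by rw [← hA0] at hgain'; exact hgain'
      have hu0' : (0:ℝ) ≤ ∑ i, u i^2 := Finset.sum_nonneg (fun i _ => sq_nonneg _)
      have h2 : σW^2 * ∑ i, u i^2 = 0 :=
        le_antisymm h1 (mul_nonneg (sq_nonneg σW) hu0')
      have h3 : ∑ i, u i^2 = 0 := by
        rcases mul_eq_zero.mp h2 with h | h
        · exact absurd h (by positivity)
        · exact h
      rw [h3, mul_zero]
      exact hB2nn
    · have hdiv : κ^2 * A2 ≤ B2 := by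
        have he : A2 * (κ^2 * A2) = (κ * A2)^2 := by ring
        have hle : A2 * (κ^2 * A2) ≤ A2 * B2 := by rw [he]; exact hk2
        exact le_of_mul_le_mul_left hle hA0
      calc κ^2 * σW^2 * ∑ i, u i^2 = κ^2 * (σW^2 * ∑ i, u i^2) := by ring
        _ ≤ κ^2 * A2 := by
            apply mul_le_mul_of_nonneg_left hgain' (sq_nonneg κ)
        _ ≤ B2 := hdiv
  have hjsd := jsd_ge_sq hV z₁ z₀
  have hgoal : κ^2 * σW^2 / 8 * ∑ i, u i^2 ≤ jsd P Q := by
    rw [hP, hQdef]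
    calc κ^2 * σW^2 / 8 * ∑ i, u i^2 ≤ B2 / 8 := by linarith
      _ = (1/8) * ∑ i, (softmax z₁ i - softmax z₀ i)^2 := by
          rw [hB2def, hP, hQdef]; ring
      _ ≤ jsd (softmax z₁) (softmax z₀) := hjsd
  exact hgoal
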